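/- Let W : ℤ × ℤ → ℝ be finitely supported and suppose W is consistent with 𝒟, i.e. for every real polynomial g in two variables: (i) ∑_x W(x)[A₁₁(x)(∇₁g)(x) + A₁₂(x)(∇₂g)(x) + B₁(x)g(x)] = 0, (ii) ∑_x W(x)[A₂₁(x)(∇₁g)(x) + A₂₂(x)(∇₂g)(x) + B₂(x)g(x)] = 0, and (iii) ∑_x W(x)A₁₂(x)g(x−e₂) = ∑_x W(x)A₂₁(x)g(x−e₁). If u and v are real polynomials in two variables satisfying 𝒟u = λu and 𝒟v = μv pointwise on ℤ × ℤ for real numbers λ, μ, then (λ − μ)·∑_{x ∈ ℤ×ℤ} W(x)u(x)v(x) = 0. -/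
import Mathlib


open MvPolynomial

noncomputable section

/-- Forward difference in the first variable. -/
def fd1 (u : ℤ × ℤ → ℝ) : ℤ × ℤ → ℝ := fun x => u (x.1 + 1, x.2) - u x

/-- Forward difference in the second variable. -/
def fd2 (u : ℤ × ℤ → ℝ) : ℤ × ℤ → ℝ := fun x => u (x.1, x.2 + 1) - u x

/-- Backward difference in the first variable. -/
def bd1 (u : ℤ × ℤ → ℝ) : ℤ × ℤ → ℝ := fun x => u x - u (x.1 - 1, x.2)

/-- Backward difference in the second variable. -/
def bd2 (u : ℤ × ℤ → ℝ) : ℤ × ℤ → ℝ := fun x => u x - u (x.1, x.2 - 1)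

/-- Evaluation of a two-variable real polynomial on the lattice `ℤ × ℤ`. -/
def pev (p : MvPolynomial (Fin 2) ℝ) : ℤ × ℤ → ℝ :=
  fun x => eval (fun i => if i = 0 then (x.1 : ℝ) else (x.2 : ℝ)) p

/-- The standard second order partial difference operator. -/
def Dop (A11 A12 A21 A22 B1 B2 : MvPolynomial (Fin 2) ℝ) (u : ℤ × ℤ → ℝ) : ℤ × ℤ → ℝ :=
  fun x => pev A11 x * fd1 (bd1 u) x + pev A12 x * fd1 (bd2 u) x
    + pev A21 x * fd2 (bd1 u) x + pev A22 x * fd2 (bd2 u) x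
    + pev B1 x * fd1 u x + pev B2 x * fd2 u x

/-- Shift of a polynomial in the first variable. -/
def sh1 (p : MvPolynomial (Fin 2) ℝ) : MvPolynomial (Fin 2) ℝ :=
  aeval (fun i : Fin 2 => if i = 0 then X 0 + 1 else X 1) p

/-- Shift of a polynomial in the second variable. -/
def sh2 (p : MvPolynomial (Fin 2) ℝ) : MvPolynomial (Fin 2) ℝ :=
  aeval (fun i : Fin 2 => if i = 0 then X 0 else X 1 + 1) p

lemma pev_sh1 (p : MvPolynomial (Fin 2) ℝ) (a b : ℤ) :
    pev (sh1 p) (a, b) = pev p (a + 1, b) := by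
  simp only [pev, sh1, aeval_def, eval_eval₂]
  rw [show ((eval fun i : Fin 2 => if i = 0 then ((a:ℝ)) else (b:ℝ)).comp
      (algebraMap ℝ (MvPolynomial (Fin 2) ℝ))) = RingHom.id ℝ from by ext r; simp]
  rw [eval₂_id]
  rw [show (fun s : Fin 2 => (eval fun i : Fin 2 => if i = 0 then (a:ℝ) else (b:ℝ))
        (if s = 0 then X 0 + 1 else X 1))
      = fun i : Fin 2 => if i = 0 then (((a+1 : ℤ)):ℝ) else ((b:ℤ):ℝ) from by
    funext i; fin_cases i <;> simp]

lemma pev_sh2 (p : MvPolynomial (Fin 2) ℝ) (a b : ℤ) :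
    pev (sh2 p) (a, b) = pev p (a, b + 1) := by
  simp only [pev, sh2, aeval_def, eval_eval₂]
  rw [show ((eval fun i : Fin 2 => if i = 0 then ((a:ℝ)) else (b:ℝ)).comp
      (algebraMap ℝ (MvPolynomial (Fin 2) ℝ))) = RingHom.id ℝ from by ext r; simp]
  rw [eval₂_id]
  rw [show (fun s : Fin 2 => (eval fun i : Fin 2 => if i = 0 then (a:ℝ) else (b:ℝ))
        (if s = 0 then X 0 else X 1 + 1))
      = fun i : Fin 2 => if i = 0 then ((a:ℤ):ℝ) else (((b+1 : ℤ)):ℝ) from by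
    funext i; fin_cases i <;> simp]

lemma pev_mul (p q : MvPolynomial (Fin 2) ℝ) (x : ℤ × ℤ) :
    pev (p * q) x = pev p x * pev q x := by simp [pev]

lemma pev_sub (p q : MvPolynomial (Fin 2) ℝ) (x : ℤ × ℤ) :
    pev (p - q) x = pev p x - pev q x := by simp [pev]

/-- `pev (G1 u v) = v·Δ₁u − u·Δ₁v`. -/
def G1 (u v : MvPolynomial (Fin 2) ℝ) : MvPolynomial (Fin 2) ℝ := v * sh1 u - u * sh1 v

/-- `pev (G2 u v) = v·Δ₂u − u·Δ₂v`. -/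
def G2 (u v : MvPolynomial (Fin 2) ℝ) : MvPolynomial (Fin 2) ℝ := v * sh2 u - u * sh2 v

/-- `pev (hP u v) = Δ₂u·Δ₁v − Δ₁u·Δ₂v`. -/
def hP (u v : MvPolynomial (Fin 2) ℝ) : MvPolynomial (Fin 2) ℝ :=
  (sh2 u - u) * (sh1 v - v) - (sh1 u - u) * (sh2 v - v)

lemma key (A11 A12 A21 A22 B1 B2 u v : MvPolynomial (Fin 2) ℝ) (a b : ℤ) :
    pev v (a, b) * Dop A11 A12 A21 A22 B1 B2 (pev u) (a, b)
      - pev u (a, b) * Dop A11 A12 A21 A22 B1 B2 (pev v) (a, b)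
    = (pev A11 (a, b) * bd1 (pev (G1 u v)) (a, b) + pev A12 (a, b) * bd2 (pev (G1 u v)) (a, b)
        + pev B1 (a, b) * pev (G1 u v) (a, b))
      + (pev A21 (a, b) * bd1 (pev (G2 u v)) (a, b) + pev A22 (a, b) * bd2 (pev (G2 u v)) (a, b)
        + pev B2 (a, b) * pev (G2 u v) (a, b))
      + (pev A12 (a, b) * pev (hP u v) (a, b - 1) - pev A21 (a, b) * pev (hP u v) (a - 1, b)) := by
  simp only [Dop, fd1, fd2, bd1, bd2, G1, G2, hP, pev_mul, pev_sub, pev_sh1, pev_sh2]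
  simp only [Int.sub_add_cancel]
  ring

/-- if the finitely supported weight `W` is consistent with `𝒟`, then
two polynomial eigenfunctions `u`, `v` with eigenvalues `λ`, `μ` satisfy
`(λ − μ)·∑ W u v = 0`. -/
theorem stmt10 (A11 A12 A21 A22 B1 B2 : MvPolynomial (Fin 2) ℝ)
    (W : ℤ × ℤ → ℝ) (hW : (Function.support W).Finite)
    (hcons1 : ∀ g : MvPolynomial (Fin 2) ℝ,
      ∑ᶠ x : ℤ × ℤ, W x *
        (pev A11 x * bd1 (pev g) x + pev A12 x * bd2 (pev g) x + pev B1 x * pev g x)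
          = 0)
    (hcons2 : ∀ g : MvPolynomial (Fin 2) ℝ,
      ∑ᶠ x : ℤ × ℤ, W x *
        (pev A21 x * bd1 (pev g) x + pev A22 x * bd2 (pev g) x + pev B2 x * pev g x)
          = 0)
    (hcons3 : ∀ g : MvPolynomial (Fin 2) ℝ,
      ∑ᶠ x : ℤ × ℤ, W x * pev A12 x * pev g (x.1, x.2 - 1) =
        ∑ᶠ x : ℤ × ℤ, W x * pev A21 x * pev g (x.1 - 1, x.2))
    (u v : MvPolynomial (Fin 2) ℝ) (lam mu : ℝ)
    (hu : Dop A11 A12 A21 A22 B1 B2 (pev u) = (fun x => lam * pev u x))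
    (hv : Dop A11 A12 A21 A22 B1 B2 (pev v) = (fun x => mu * pev v x)) :
    (lam - mu) * ∑ᶠ x : ℤ × ℤ, W x * pev u x * pev v x = 0 := by
  classical
  set s : Finset (ℤ × ℤ) := hW.toFinset with hs
  have hconv : ∀ F : ℤ × ℤ → ℝ, (∀ x, W x = 0 → F x = 0) →
      ∑ᶠ x : ℤ × ℤ, F x = ∑ x ∈ s, F x := by
    intro F h0
    refine finsum_eq_sum_of_support_subset F ?_
    intro x hx
    simp only [hs, Set.Finite.coe_toFinset, Function.mem_support]
    intro hWx
    exact hx (h0 x hWx)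
  have h1 : ∑ x ∈ s, W x *
      (pev A11 x * bd1 (pev (G1 u v)) x + pev A12 x * bd2 (pev (G1 u v)) x
        + pev B1 x * pev (G1 u v) x) = 0 := by
    rw [← hconv _ (fun x hx => by rw [hx]; ring)]
    exact hcons1 (G1 u v)
  have h2 : ∑ x ∈ s, W x *
      (pev A21 x * bd1 (pev (G2 u v)) x + pev A22 x * bd2 (pev (G2 u v)) x
        + pev B2 x * pev (G2 u v) x) = 0 := by
    rw [← hconv _ (fun x hx => by rw [hx]; ring)]
    exact hcons2 (G2 u v)
  have h3 : ∑ x ∈ s, W x * pev A12 x * pev (hP u v) (x.1, x.2 - 1)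
      = ∑ x ∈ s, W x * pev A21 x * pev (hP u v) (x.1 - 1, x.2) := by
    rw [← hconv _ (fun x hx => by rw [hx]; ring),
        ← hconv _ (fun x hx => by rw [hx]; ring)]
    exact hcons3 (hP u v)
  have hmain : ∑ x ∈ s, W x *
      (pev v x * Dop A11 A12 A21 A22 B1 B2 (pev u) x
        - pev u x * Dop A11 A12 A21 A22 B1 B2 (pev v) x) = 0 := by
    have hpt : ∀ x : ℤ × ℤ, W x *
        (pev v x * Dop A11 A12 A21 A22 B1 B2 (pev u) x
          - pev u x * Dop A11 A12 A21 A22 B1 B2 (pev v) x)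
      = W x * (pev A11 x * bd1 (pev (G1 u v)) x + pev A12 x * bd2 (pev (G1 u v)) x
          + pev B1 x * pev (G1 u v) x)
        + W x * (pev A21 x * bd1 (pev (G2 u v)) x + pev A22 x * bd2 (pev (G2 u v)) x
          + pev B2 x * pev (G2 u v) x)
        + (W x * pev A12 x * pev (hP u v) (x.1, x.2 - 1)
          - W x * pev A21 x * pev (hP u v) (x.1 - 1, x.2)) := by
      intro x
      have := key A11 A12 A21 A22 B1 B2 u v x.1 x.2
      rw [show ((x.1, x.2) : ℤ × ℤ) = x from rfl] at this
      rw [this]; ring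
    rw [Finset.sum_congr rfl (fun x _ => hpt x)]
    rw [Finset.sum_add_distrib, Finset.sum_add_distrib, Finset.sum_sub_distrib]
    rw [h1, h2, h3]
    ring
  rw [hu, hv] at hmain
  have hgoal : ∑ᶠ x : ℤ × ℤ, W x * pev u x * pev v x
      = ∑ x ∈ s, W x * pev u x * pev v x :=
    hconv _ (fun x hx => by rw [hx]; ring)
  rw [hgoal, Finset.mul_sum, ← hmain]
  refine Finset.sum_congr rfl fun x _ => by ring
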